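/- Let g ∈ ℤ[X] be primitive and non-constant, and let a ∈ ℤ, b ∈ ℕ with b ≥ 1 and gcd(a, b) = 1, such that f = (a/b) · g lies in Int(ℤ). If f is irreducible in Int(ℤ), then a = ±1 and b equals the fixed divisor d(g). -/

import Mathlib

open Polynomial

/-- The ring of integer-valued polynomials `Int(ℤ) = {f ∈ ℚ[X] | f(ℤ) ⊆ ℤ}`,
as a subring of ℚ[X]. -/
noncomputable def IntValued : Subring (Polynomial ℚ) where
  carrier := {f | ∀ c : ℤ, ∃ m : ℤ, f.eval (c : ℚ) = (m : ℚ)}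
  zero_mem' := fun c => ⟨0, by simp⟩
  one_mem' := fun c => ⟨1, by simp⟩
  add_mem' := by
    rintro f g hf hg c
    obtain ⟨m, hm⟩ := hf c
    obtain ⟨n, hn⟩ := hg c
    exact ⟨m + n, by simp [hm, hn]⟩
  mul_mem' := by
    rintro f g hf hg c
    obtain ⟨m, hm⟩ := hf c
    obtain ⟨n, hn⟩ := hg c
    exact ⟨m * n, by simp [hm, hn]⟩
  neg_mem' := by
    rintro f hf c
    obtain ⟨m, hm⟩ := hf c
    exact ⟨-m, by simp [hm]⟩

/-- The fixed divisor `d(f)` of `f ∈ ℤ[X]`: the nonnegative generator of the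
ideal of ℤ generated by the image `f(ℤ)`. -/
noncomputable def fixedDivisor (f : Polynomial ℤ) : ℕ :=
  (@Submodule.IsPrincipal.generator ℤ ℤ _ _ _
    (Ideal.span (Set.range fun c : ℤ => f.eval c))
    (IsPrincipalIdealRing.principal _)).natAbs

lemma fd_dvd (g : Polynomial ℤ) (c : ℤ) : (fixedDivisor g : ℤ) ∣ g.eval c := by
  rw [fixedDivisor, Int.natAbs_dvd]
  have h1 : g.eval c ∈ Ideal.span (Set.range fun c : ℤ => g.eval c) :=
    Ideal.subset_span ⟨c, rfl⟩
  rwa [← Ideal.span_singleton_generator (Ideal.span (Set.range fun c : ℤ => g.eval c)),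
    Ideal.mem_span_singleton] at h1

lemma dvd_fd (g : Polynomial ℤ) (n : ℤ) (h : ∀ c : ℤ, n ∣ g.eval c) :
    n ∣ (fixedDivisor g : ℤ) := by
  rw [fixedDivisor, Int.dvd_natAbs]
  have h2 : Ideal.span (Set.range fun c : ℤ => g.eval c) ≤ Ideal.span {n} := by
    rw [Ideal.span_le]
    rintro _ ⟨c, rfl⟩
    exact Ideal.mem_span_singleton.mpr (h c)
  exact Ideal.mem_span_singleton.mp (h2 (Submodule.IsPrincipal.generator_mem _))

lemma fd_ne_zero (g : Polynomial ℤ) (hg : g ≠ 0) : fixedDivisor g ≠ 0 := by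
  intro h
  apply hg
  apply Polynomial.zero_of_eval_zero
  intro c
  have := fd_dvd g c
  rw [h] at this
  simpa using this

/-- Remark 1 (iii): if `f = (a/b)·g ∈ Int(ℤ)` with `g` primitive non-constant,
`gcd(a,b) = 1`, is irreducible in `Int(ℤ)`, then `a = ±1` and `b = d(g)`. -/
theorem irreducible_imp_unit_num_and_fixedDivisor_den
    (g : Polynomial ℤ) (hg : g.IsPrimitive) (hnc : 0 < g.natDegree)
    (a : ℤ) (b : ℕ) (hb : 1 ≤ b) (hab : Int.gcd a b = 1)
    (f : IntValued)
    (hf : (f : Polynomial ℚ)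
        = Polynomial.C ((a : ℚ) / (b : ℚ)) * g.map (Int.castRingHom ℚ))
    (hirr : Irreducible f) :
    (a = 1 ∨ a = -1) ∧ b = fixedDivisor g := by
  set G := g.map (Int.castRingHom ℚ) with hG
  have hevalG : ∀ c : ℤ, G.eval (c : ℚ) = ((g.eval c : ℤ) : ℚ) := fun c => by
    exact eval_intCast_map (Int.castRingHom ℚ) g c
  have hg0 : g ≠ 0 := fun h => by simp [h] at hnc
  have hd0 : fixedDivisor g ≠ 0 := fd_ne_zero g hg0
  set d := fixedDivisor g with hdd
  have hbq : (b : ℚ) ≠ 0 := by exact_mod_cast Nat.one_le_iff_ne_zero.mp hb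
  -- b divides all values of g
  have hbdvd : ∀ c : ℤ, (b : ℤ) ∣ g.eval c := by
    intro c
    obtain ⟨m, hm⟩ := f.2 c
    rw [hf] at hm
    simp only [eval_mul, eval_C, hevalG] at hm
    have h2 : (a : ℚ) * (g.eval c : ℤ) = (m : ℚ) * b := by
      field_simp at hm
      linarith [hm]
    have h3 : a * g.eval c = m * b := by exact_mod_cast h2
    have h4 : (b : ℤ) ∣ a * g.eval c := ⟨m, by linarith⟩
    exact Int.dvd_of_dvd_mul_right_of_gcd_one h4 (Int.gcd_comm (b:ℤ) a ▸ hab)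
  have hbd : b ∣ d := by
    have := dvd_fd g (b : ℤ) hbdvd
    exact_mod_cast this
  obtain ⟨k, hk⟩ := hbd
  have hk0 : k ≠ 0 := by rintro rfl; simp [hk] at hd0
  have hdq : (d : ℚ) ≠ 0 := by exact_mod_cast hd0
  -- the two factors
  have hddvd : ∀ c : ℤ, (d : ℤ) ∣ g.eval c := fun c => fd_dvd g c
  set x : IntValued := ⟨Polynomial.C ((a * k : ℤ) : ℚ), fun c => ⟨a * k, by simp⟩⟩ with hx
  have ymem : (Polynomial.C ((d : ℚ)⁻¹) * G)
      ∈ {f : Polynomial ℚ | ∀ c : ℤ, ∃ m : ℤ, f.eval (c : ℚ) = (m : ℚ)} := by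
    intro c
    obtain ⟨t, ht⟩ := hddvd c
    refine ⟨t, ?_⟩
    simp only [eval_mul, eval_C, hevalG, ht]
    push_cast
    field_simp
  set y : IntValued := ⟨Polynomial.C ((d : ℚ)⁻¹) * G, ymem⟩ with hy
  have hxy : f = x * y := by
    apply Subtype.ext
    push_cast [hx, hy, hf]
    rw [← mul_assoc, ← Polynomial.C_mul]
    congr 1
    rw [hk]
    push_cast
    field_simp
  rcases hirr.isUnit_or_isUnit hxy with hux | huy
  · -- x is a unit: a*k = ±1
    obtain ⟨u, hu⟩ := hux
    have h1 : x * ↑u⁻¹ = 1 := by rw [← hu]; exact u.mul_inv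
    have h2 : (x : Polynomial ℚ) * ((↑u⁻¹ : IntValued) : Polynomial ℚ) = 1 := by
      exact_mod_cast congrArg (Subtype.val) h1
    obtain ⟨n, hn⟩ := (↑u⁻¹ : IntValued).2 0
    have hn' : Polynomial.eval (0 : ℚ) ((↑u⁻¹ : IntValued) : Polynomial ℚ) = (n : ℚ) := by
      simpa using hn
    have h3 : ((a * k : ℤ) : ℚ) * (n : ℚ) = 1 := by
      have := congrArg (Polynomial.eval ((0 : ℤ) : ℚ)) h2
      simpa [hx, hn'] using this
    have h4 : a * k * n = 1 := by exact_mod_cast h3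
    have h5 : IsUnit (a * (k : ℤ)) := IsUnit.of_mul_eq_one n h4
    rw [Int.isUnit_iff] at h5
    have hk1 : (k : ℤ) ∣ 1 := by
      rcases h5 with h | h
      · exact ⟨a, by linarith⟩
      · exact ⟨-a, by linarith⟩
    have hk1' : k = 1 := by
      have : (k : ℤ) = 1 := Int.eq_one_of_dvd_one (by positivity) hk1
      exact_mod_cast this
    subst hk1'
    constructor
    · rcases h5 with h | h
      · left; simpa using h
      · right; simpa using h
    · simpa using hk.symm
  · -- y cannot be a unit: degree > 0
    exfalso
    have h1 : IsUnit ((y : IntValued) : Polynomial ℚ) := huy.map IntValued.subtype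
    have h2 := Polynomial.natDegree_eq_zero_of_isUnit h1
    have hGne : G ≠ 0 := by
      rw [hG, Ne, Polynomial.map_eq_zero_iff (Int.cast_injective (α := ℚ))]
      exact hg0
    have h3 : ((y : IntValued) : Polynomial ℚ).natDegree = g.natDegree := by
      rw [hy]
      simp only
      rw [Polynomial.natDegree_mul (by simpa using inv_ne_zero hdq) hGne,
        Polynomial.natDegree_C, hG,
        Polynomial.natDegree_map_eq_of_injective (Int.cast_injective (α := ℚ))]
      ring
    omega
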